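/- In the setting of the Filling Lemma, the operator Φ : C(∂Δ, E) → C(Δ, E), γ ↦ Φ(γ), is linear and continuous with respect to the compact-open topologies. -/

import Mathlib

open Set Filter Topology

private theorem filling_exists_coords {F : Type*} [NormedAddCommGroup F] [NormedSpace ℝ F]
    [FiniteDimensional ℝ F] {r : ℕ} (v : Fin r → F) (hv : AffineIndependent ℝ v) :
    ∃ lam : Fin r → F → ℝ, (∀ j, Continuous (lam j)) ∧
      ∀ (x : F) (c : Fin r → ℝ), ∑ j, c j = 1 → x = ∑ j, c j • v j → ∀ j, lam j x = c j := by
  classical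
  obtain ⟨T, hsubT, hindT, hspanT⟩ := exists_subset_affineIndependent_affineSpan_eq_top hv.range
  let C : AffineBasis T ℝ F := ⟨fun p => (p : F), hindT, by rwa [Subtype.range_coe]⟩
  have hvinj : Function.Injective v := hv.injective
  let e : Fin r ↪ T :=
    ⟨fun j => ⟨v j, hsubT ⟨j, rfl⟩⟩, fun a b h => hvinj (congrArg Subtype.val h)⟩
  refine ⟨fun j x => C.coord (e j) x,
    fun j => (C.coord (e j)).continuous_of_finiteDimensional, ?_⟩
  intro x c hc hx j
  set W : T → ℝ := Function.extend e c 0 with hW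
  have hWe : ∀ j, W (e j) = c j := fun j => e.injective.extend_apply c 0 j
  have hCe : (⇑C ∘ ⇑e) = v := rfl
  have hx' : x = (Finset.univ.map e).affineCombination ℝ C W := by
    rw [Finset.affineCombination_map, hCe]
    have : (W ∘ ⇑e) = c := funext hWe
    rw [this, Finset.univ.affineCombination_eq_linear_combination v c hc, hx]
  have hsum : ∑ p ∈ Finset.map e Finset.univ, W p = 1 := by
    rw [Finset.sum_map]
    simpa [hWe] using hc
  have h2 := C.coord_apply_combination_of_mem
    (i := e j) (Finset.mem_map_of_mem _ (Finset.mem_univ j)) hsum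
  show C.coord (e j) x = c j
  rw [hx', ← hWe j]
  exact h2

private theorem filling_smul_tendsto_zero {E : Type*} [AddCommGroup E] [Module ℝ E]
    [TopologicalSpace E] [IsTopologicalAddGroup E] [ContinuousSMul ℝ E]
    {X : Type*} [TopologicalSpace X] {l : Filter X} {K : Set E} (hK : IsCompact K)
    {c : X → ℝ} {u : X → E} (hc : Tendsto c l (𝓝 0)) (hu : ∀ i, u i ∈ K) :
    Tendsto (fun i => c i • u i) l (𝓝 0) := by
  rw [tendsto_def]
  intro V hV
  obtain ⟨V', hV'sub, hV'open, h0V'⟩ := mem_nhds_iff.mp hV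
  have hn : IsOpen ((fun p : ℝ × E => p.1 • p.2) ⁻¹' V') :=
    continuous_smul.isOpen_preimage _ hV'open
  have hsub : ({(0 : ℝ)} ×ˢ K) ⊆ (fun p : ℝ × E => p.1 • p.2) ⁻¹' V' := by
    rintro ⟨a, z⟩ ⟨ha, hz⟩
    simp only [mem_singleton_iff] at ha
    simp [ha, h0V']
  obtain ⟨U1, U2, hU1o, _hU2o, h0U1, hKU2, hprod⟩ :=
    generalized_tube_lemma isCompact_singleton hK hn hsub
  have h1 : c ⁻¹' U1 ∈ l := hc (hU1o.mem_nhds (h0U1 rfl))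
  filter_upwards [h1] with i hi
  exact hV'sub (hprod (Set.mk_mem_prod hi (hKU2 (hu i))))

theorem filling_operator_linear_continuous
    {F : Type*} [NormedAddCommGroup F] [NormedSpace ℝ F] [FiniteDimensional ℝ F]
    {E : Type*} [AddCommGroup E] [Module ℝ E] [TopologicalSpace E]
    [IsTopologicalAddGroup E] [ContinuousSMul ℝ E]
    (r : ℕ) (hr : 1 ≤ r) (v : Fin r → F) (hv : AffineIndependent ℝ v)
    (Δ : Set F) (hΔ : Δ = convexHull ℝ (Set.range v))
    (b : F) (hb : b = (r : ℝ)⁻¹ • ∑ j, v j)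
    (B : Set F) (hB : B = ⋃ i, convexHull ℝ (v '' {j | j ≠ i}))
    (xΔ : F) (hxΔ : xΔ ∈ B) :
    ∃ Φ : C(B, E) → C(Δ, E), IsLinearMap ℝ Φ ∧ Continuous Φ ∧
      (∀ (γ : C(B, E)) (x : Δ) (t : ℝ) (s : Fin r → ℝ), 0 ≤ t → (∀ j, 0 ≤ s j) →
        (∃ i, s i = 0) → t + ∑ j, s j = 1 → t < 1 →
        (x : F) = t • b + ∑ j, s j • v j →
        ∀ hz : (1 - t)⁻¹ • ∑ j, s j • v j ∈ B,
          Φ γ x = t • γ ⟨xΔ, hxΔ⟩ + (1 - t) • γ ⟨(1 - t)⁻¹ • ∑ j, s j • v j, hz⟩) ∧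
      (∀ (γ : C(B, E)) (hbΔ : b ∈ Δ), Φ γ ⟨b, hbΔ⟩ = γ ⟨xΔ, hxΔ⟩) := by
  classical
  haveI : Nonempty (Fin r) := Fin.pos_iff_nonempty.mp hr
  have hrne : (r : ℝ) ≠ 0 := Nat.cast_ne_zero.mpr (by omega)
  obtain ⟨lam, lamCont, lamUniq⟩ := filling_exists_coords v hv
  -- convex coordinates on Δ
  have lamSpec : ∀ x ∈ Δ, (∀ j, 0 ≤ lam j x) ∧ ∑ j, lam j x = 1 ∧ ∑ j, lam j x • v j = x := by
    intro x hx
    rw [hΔ, convexHull_range_eq_exists_affineCombination] at hx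
    obtain ⟨s, w, hw0, hw1, hw⟩ := hx
    set c : Fin r → ℝ := Set.indicator ↑s w with hcdef
    have hcsum : ∑ j, c j = 1 := by
      rw [hcdef, Finset.sum_indicator_subset w s.subset_univ, hw1]
    have hxc : x = ∑ j, c j • v j := by
      rw [← Finset.univ.affineCombination_eq_linear_combination v c hcsum, hcdef,
        ← Finset.affineCombination_indicator_subset w v s.subset_univ, hw]
    have lamEq : ∀ j, lam j x = c j := lamUniq x c hcsum hxc
    refine ⟨fun j => ?_, by simp only [lamEq]; exact hcsum, by simp only [lamEq]; exact hxc.symm⟩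
    rw [lamEq j, hcdef]
    exact Set.indicator_nonneg (fun a ha => hw0 a (Finset.mem_coe.mp ha)) j
  set m : F → ℝ := fun x => Finset.univ.inf' Finset.univ_nonempty fun j => lam j x with hm
  set tt : F → ℝ := fun x => r * m x with htt
  have mCont : Continuous m := Continuous.finset_inf'_apply _ fun j _ => lamCont j
  have ttCont : Continuous tt := continuous_const.mul mCont
  have mle : ∀ x j, m x ≤ lam j x := fun x j => Finset.inf'_le _ (Finset.mem_univ j)
  have mex : ∀ x : F, ∃ j, m x = lam j x := by
    intro x
    obtain ⟨j, _, hj⟩ :=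
      Finset.exists_mem_eq_inf' (s := (Finset.univ : Finset (Fin r))) Finset.univ_nonempty
        (fun j => lam j x)
    exact ⟨j, hj⟩
  have m0 : ∀ x ∈ Δ, 0 ≤ m x := by
    intro x hx
    obtain ⟨j, hj⟩ := mex x
    rw [hj]; exact (lamSpec x hx).1 j
  have tt0 : ∀ x ∈ Δ, 0 ≤ tt x := fun x hx => mul_nonneg (Nat.cast_nonneg r) (m0 x hx)
  have ttsum : ∀ x : F, tt x = ∑ _j : Fin r, m x := by
    intro x
    simp [htt, Finset.sum_const, Finset.card_univ, nsmul_eq_mul]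
  have tt1 : ∀ x ∈ Δ, tt x ≤ 1 := by
    intro x hx
    rw [ttsum x]
    calc ∑ _j : Fin r, m x ≤ ∑ j, lam j x := Finset.sum_le_sum fun j _ => mle x j
      _ = 1 := (lamSpec x hx).2.1
  set y : F → F := fun x => (1 - tt x)⁻¹ • ∑ j, (lam j x - m x) • v j with hy
  have ssum : ∀ x ∈ Δ, ∑ j, (lam j x - m x) = 1 - tt x := by
    intro x hx
    rw [Finset.sum_sub_distrib, (lamSpec x hx).2.1, ← ttsum x]
  have hyB : ∀ x ∈ Δ, tt x < 1 → y x ∈ B := by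
    intro x hx h1
    obtain ⟨i, hi⟩ := mex x
    have hzero : lam i x - m x = 0 := by rw [hi]; ring
    have herase : ∑ j ∈ Finset.univ.erase i, (lam j x - m x) = 1 - tt x := by
      rw [Finset.sum_erase (f := fun j => lam j x - m x) _ hzero, ssum x hx]
    have hpos : 0 < ∑ j ∈ Finset.univ.erase i, (lam j x - m x) := by
      rw [herase]; linarith
    have hcm : (Finset.univ.erase i).centerMass (fun j => lam j x - m x) v ∈
        convexHull ℝ (v '' {j | j ≠ i}) := by
      apply Finset.centerMass_mem_convexHull
      · intro j _; have := mle x j; linarith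
      · exact hpos
      · intro j hj; exact ⟨j, (Finset.mem_erase.mp hj).1, rfl⟩
    have hcm' : (Finset.univ.erase i).centerMass (fun j => lam j x - m x) v = y x := by
      rw [Finset.centerMass, herase, hy]
      congr 1
      rw [Finset.sum_erase (f := fun j => (lam j x - m x) • v j) _ (by show (lam i x - m x) • v i = 0; rw [hzero, zero_smul])]
    rw [hB]
    exact mem_iUnion.mpr ⟨i, hcm' ▸ hcm⟩
  have hBcomp : IsCompact B := by
    rw [hB]
    exact isCompact_iUnion fun i => (Set.toFinite _).isCompact_convexHull (𝕜 := ℝ)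
  haveI : CompactSpace ↥B := isCompact_iff_compactSpace.mp hBcomp
  set yB : Δ → B := fun x => if h : tt ↑x < 1 then ⟨y ↑x, hyB ↑x x.2 h⟩ else ⟨xΔ, hxΔ⟩
    with hyBdef
  set Fill : C(B, E) → Δ → E :=
    fun γ x => tt ↑x • γ ⟨xΔ, hxΔ⟩ + (1 - tt ↑x) • γ (yB x) with hFill
  have fillCont : ∀ γ : C(B, E), Continuous (Fill γ) := by
    intro γ
    rw [continuous_iff_continuousAt]
    intro x₀
    have contA : ContinuousAt (fun x : Δ => tt ↑x • γ ⟨xΔ, hxΔ⟩) x₀ :=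
      (((ttCont.comp continuous_subtype_val).smul continuous_const).continuousAt)
    by_cases h : tt ↑x₀ < 1
    · apply ContinuousAt.add contA
      have hS : {x : Δ | tt ↑x < 1} ∈ 𝓝 x₀ :=
        (isOpen_lt (ttCont.comp continuous_subtype_val) continuous_const).mem_nhds h
      have hyc : ContinuousAt (fun x : Δ => y ↑x) x₀ := by
        apply ContinuousAt.smul
        · exact ContinuousAt.inv₀
            ((continuous_const.sub (ttCont.comp continuous_subtype_val)).continuousAt)
            (sub_ne_zero.mpr (ne_of_gt h))
        · exact (continuous_finset_sum _ fun j _ =>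
            (((lamCont j).sub mCont).comp continuous_subtype_val).smul
              continuous_const).continuousAt
      have hyBval : ContinuousAt (fun x : Δ => (yB x : F)) x₀ := by
        apply hyc.congr
        filter_upwards [hS] with x hx
        simp only [hyBdef, dif_pos hx]
      have hyBc : ContinuousAt yB x₀ := by
        rw [IsInducing.subtypeVal.continuousAt_iff]
        exact hyBval
      exact (((continuous_const.sub (ttCont.comp continuous_subtype_val)).continuousAt).smul
        (γ.continuous.continuousAt.comp hyBc))
    · have h1 : tt ↑x₀ = 1 := le_antisymm (tt1 _ x₀.2) (not_lt.mp h)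
      have hzero : Tendsto (fun x : Δ => (1 - tt ↑x) • γ (yB x)) (𝓝 x₀) (𝓝 0) := by
        apply filling_smul_tendsto_zero (isCompact_range γ.continuous)
        · have htend : Tendsto (fun x : Δ => 1 - tt ↑x) (𝓝 x₀) (𝓝 (1 - tt ↑x₀)) :=
            ((continuous_const.sub (ttCont.comp continuous_subtype_val)).tendsto x₀)
          rw [h1, sub_self] at htend
          exact htend
        · exact fun x => ⟨yB x, rfl⟩
      have hval : Fill γ x₀ = tt ↑x₀ • γ ⟨xΔ, hxΔ⟩ + 0 := by
        simp [hFill, h1]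
      unfold ContinuousAt
      rw [hval]
      exact (contA.tendsto).add hzero
  set Φ : C(B, E) → C(Δ, E) := fun γ => ⟨Fill γ, fillCont γ⟩ with hΦ
  have Φapp : ∀ (γ : C(B, E)) (x : Δ),
      Φ γ x = tt ↑x • γ ⟨xΔ, hxΔ⟩ + (1 - tt ↑x) • γ (yB x) := fun γ x => rfl
  have Φadd : ∀ γ₁ γ₂, Φ (γ₁ + γ₂) = Φ γ₁ + Φ γ₂ := by
    intro γ₁ γ₂
    ext x
    simp only [Φapp, ContinuousMap.add_apply, smul_add]
    abel
  have Φsmul : ∀ (c : ℝ) (γ), Φ (c • γ) = c • Φ γ := by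
    intro c γ
    ext x
    simp only [Φapp, ContinuousMap.smul_apply, smul_add, smul_comm _ c]
  have Φcont : Continuous Φ := by
    have hC : Continuous (AddMonoidHom.mk' Φ Φadd) := by
      apply continuous_of_continuousAt_zero (AddMonoidHom.mk' Φ Φadd)
      rw [ContinuousAt, map_zero, ContinuousMap.tendsto_nhds_compactOpen]
      intro K hK U hU hmaps
      rcases K.eq_empty_or_nonempty with rfl | ⟨x0, hx0⟩
      · exact Eventually.of_forall fun γ => Set.mapsTo_empty _ _
      · have h0U : (0 : E) ∈ U := by simpa using hmaps hx0
        obtain ⟨V, hV, hVU⟩ := exists_nhds_zero_half (hU.mem_nhds h0U)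
        obtain ⟨W, ⟨hWn, hWbal⟩, hWV⟩ := (nhds_basis_balanced ℝ E).mem_iff.mp hV
        obtain ⟨W', hW'W, hW'open, h0W'⟩ := mem_nhds_iff.mp hWn
        have hev : {γ : C(B, E) | Set.MapsTo γ Set.univ W'} ∈ 𝓝 0 := by
          apply (ContinuousMap.isOpen_setOf_mapsTo isCompact_univ hW'open).mem_nhds
          intro p _
          simpa using h0W'
        filter_upwards [hev] with γ hγ x hxK
        have hga : γ ⟨xΔ, hxΔ⟩ ∈ W := hW'W (hγ (Set.mem_univ _))
        have hgb : γ (yB x) ∈ W := hW'W (hγ (Set.mem_univ _))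
        have ht0 : 0 ≤ tt ↑x := tt0 _ x.2
        have ht1 : tt ↑x ≤ 1 := tt1 _ x.2
        have h1 : tt ↑x • γ ⟨xΔ, hxΔ⟩ ∈ W :=
          hWbal.smul_mem (by rw [Real.norm_eq_abs, abs_of_nonneg ht0]; exact ht1) hga
        have h2 : (1 - tt ↑x) • γ (yB x) ∈ W :=
          hWbal.smul_mem
            (by rw [Real.norm_eq_abs, abs_of_nonneg (by linarith)]; linarith) hgb
        exact hVU _ (hWV h1) _ (hWV h2)
    exact hC
  refine ⟨Φ, ⟨Φadd, Φsmul⟩, Φcont, ?_, ?_⟩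
  · intro γ x t s ht hs hex hsum htlt hx hz
    have hlam : ∀ j, lam j ↑x = t * (r : ℝ)⁻¹ + s j := by
      apply lamUniq
      · rw [Finset.sum_add_distrib, Finset.sum_const, Finset.card_univ, Fintype.card_fin,
          nsmul_eq_mul]
        field_simp
        linarith [hsum]
      · rw [hx, hb, smul_smul, Finset.smul_sum, ← Finset.sum_add_distrib]
        congr 1
        ext j
        rw [← add_smul]
    have hmx : m ↑x = t * (r : ℝ)⁻¹ := by
      obtain ⟨i0, hi0⟩ := hex
      apply le_antisymm
      · calc m ↑x ≤ lam i0 ↑x := mle _ i0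
          _ = t * (r : ℝ)⁻¹ := by rw [hlam i0, hi0, add_zero]
      · apply Finset.le_inf'
        intro j _
        rw [hlam j]
        have := hs j
        linarith
    have httx : tt ↑x = t := by
      rw [htt]
      show (r : ℝ) * m ↑x = t
      rw [hmx]
      field_simp
    have hyx : y ↑x = (1 - t)⁻¹ • ∑ j, s j • v j := by
      rw [hy]
      show (1 - tt ↑x)⁻¹ • ∑ j, (lam j ↑x - m ↑x) • v j = _
      rw [httx]
      congr 1
      apply Finset.sum_congr rfl
      intro j _
      rw [hlam j, hmx]
      ring_nf
    have hc : tt ↑x < 1 := by rw [httx]; exact htlt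
    have hyBx : yB x = ⟨(1 - t)⁻¹ • ∑ j, s j • v j, hz⟩ := by
      show (if h : tt ↑x < 1 then (⟨y ↑x, hyB ↑x x.2 h⟩ : B) else ⟨xΔ, hxΔ⟩) = _
      rw [dif_pos hc]
      exact Subtype.ext hyx
    rw [Φapp, hyBx, httx]
  · intro γ hbΔ
    have hlamb : ∀ j, lam j b = (r : ℝ)⁻¹ := by
      apply lamUniq
      · rw [Finset.sum_const, Finset.card_univ, Fintype.card_fin, nsmul_eq_mul]
        field_simp
      · rw [hb, Finset.smul_sum]
    have hmb : m b = (r : ℝ)⁻¹ := by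
      rw [hm]
      show Finset.univ.inf' _ (fun j => lam j b) = (r : ℝ)⁻¹
      simp [hlamb]
    have httb : tt b = 1 := by
      rw [htt]
      show (r : ℝ) * m b = 1
      rw [hmb]
      field_simp
    have hyBb : yB ⟨b, hbΔ⟩ = ⟨xΔ, hxΔ⟩ := by
      show (if h : tt ↑(⟨b, hbΔ⟩ : Δ) < 1 then (⟨y ↑(⟨b, hbΔ⟩ : Δ), hyB _ hbΔ h⟩ : B)
        else ⟨xΔ, hxΔ⟩) = _
      rw [dif_neg (by show ¬tt b < 1; rw [httb]; exact lt_irrefl 1)]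
    rw [Φapp, hyBb, httb]
    simp
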